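/- arXiv:1211.1299 — 3 statements merged into one kernel-verified Lean document; each statement's English description precedes it below -/
import Mathlib

section
/- If a hypergraph H has cutwidth at most k, then the treewidth of its incidence graph is at most max(k, 1). -/
/-- A tree decomposition of a (simple) graph. -/
structure TreeDecomp {V : Type} (G : SimpleGraph V) where
  ι : Type
  tree : SimpleGraph ι
  isTree : tree.IsTree
  bag : ι → Set V
  bag_vertex : ∀ v, ∃ i, v ∈ bag i
  bag_edge : ∀ u v, G.Adj u v → ∃ i, u ∈ bag i ∧ v ∈ bag i
  bag_connected : ∀ v i j (p : tree.Path i j), v ∈ bag i → v ∈ bag j →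
    ∀ x ∈ p.1.support, v ∈ bag x

/-- The treewidth of a simple graph: the infimum over tree decompositions of the
maximum bag size minus one. -/
noncomputable def treewidth {V : Type} (G : SimpleGraph V) : ℕ∞ :=
  ⨅ (D : TreeDecomp G), ⨆ i, (D.bag i).encard - 1

/-- A hypergraph: a type of vertices, a type (index set) of hyperedges, and an
incidence relation. Hyperedges may repeat and may be empty or singletons. -/
structure Hypergraph' where
  V : Type
  E : Type
  mem : V → E → Prop

/-- The incidence graph of a hypergraph: the bipartite graph on `V ⊕ E` with an
edge between `v` and `e` whenever `v ∈ e`. -/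
def Hypergraph'.incidenceGraph (H : Hypergraph') : SimpleGraph (H.V ⊕ H.E) :=
  SimpleGraph.fromRel (fun x y => ∃ v e, x = Sum.inl v ∧ y = Sum.inr e ∧ H.mem v e)

/-- The cut at position `i` of a linear layout `l`: the hyperedges having a
vertex strictly to the left of `i` and one strictly to the right. -/
def Hypergraph'.cutAt (H : Hypergraph') (l : H.V → ℝ) (i : ℝ) : Set H.E :=
  {e | ∃ v w, H.mem v e ∧ H.mem w e ∧ l v < i ∧ i < l w}

/-- `H` has cutwidth at most `k`: some injective linear layout has all cuts of
size at most `k`. -/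
def Hypergraph'.cutwidthAtMost (H : Hypergraph') (k : ℕ) : Prop :=
  ∃ l : H.V → ℝ, Function.Injective l ∧ ∀ i : ℝ, (H.cutAt l i).encard ≤ k

open SimpleGraph Sum

section Caterpillar
variable {E : Type}

/-- The caterpillar relation: a spine on `ℕ`, with each leaf `e : E` attached to
the spine vertex `f e`. -/
def catRel (f : E → ℕ) : (ℕ ⊕ E) → (ℕ ⊕ E) → Prop := fun a b =>
  (∃ i, a = inl i ∧ b = inl (i + 1)) ∨ (∃ e, a = inl (f e) ∧ b = inr e)

/-- The caterpillar graph. -/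
def cat (f : E → ℕ) : SimpleGraph (ℕ ⊕ E) := SimpleGraph.fromRel (catRel f)

lemma cat_adj_succ (f : E → ℕ) (i : ℕ) : (cat f).Adj (inl i) (inl (i + 1)) := by
  rw [cat, fromRel_adj]
  exact ⟨by simp, Or.inl (Or.inl ⟨i, rfl, rfl⟩)⟩

lemma cat_adj_leaf (f : E → ℕ) (e : E) : (cat f).Adj (inl (f e)) (inr e) := by
  rw [cat, fromRel_adj]
  exact ⟨by simp, Or.inl (Or.inr ⟨e, rfl, rfl⟩)⟩

lemma cat_connected (f : E → ℕ) : (cat f).Connected := by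
  rw [connected_iff]
  have h : ∀ i : ℕ, (cat f).Reachable (inl i) (inl 0) := by
    intro i
    induction i with
    | zero => exact Reachable.refl _
    | succ n ih => exact ((cat_adj_succ f n).symm.reachable).trans ih
  have key : ∀ a : ℕ ⊕ E, (cat f).Reachable a (inl 0) := by
    rintro (i | e)
    · exact h i
    · exact ((cat_adj_leaf f e).symm.reachable).trans (h _)
  exact ⟨fun a b => (key a).trans (key b).symm, ⟨inl 0⟩⟩

lemma walk_invariant {V β : Type} {G : SimpleGraph V} (g : V → β) (bad : Sym2 V)
    (h : ∀ x y, G.Adj x y → s(x, y) ≠ bad → g x = g y) :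
    ∀ {u v : V} (w : G.Walk u v), bad ∉ w.edges → g u = g v := by
  intro u v w
  induction w with
  | nil => intro _; rfl
  | cons adj p ih =>
    intro hbad
    rw [Walk.edges_cons, List.mem_cons] at hbad
    push_neg at hbad
    exact (h _ _ adj (Ne.symm hbad.1)).trans (ih hbad.2)

lemma cat_walk_bad (f : E → ℕ) {a b : ℕ ⊕ E} (hr : catRel f a b) (p : (cat f).Walk a b)
    (hmem : s(a, b) ∉ p.edges) : False := by
  rcases hr with ⟨i, rfl, rfl⟩ | ⟨e, rfl, rfl⟩
  · have key := walk_invariant (G := cat f) (fun x => decide (Sum.elim id f x ≤ i))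
      s(inl i, inl (i + 1)) ?_ p hmem
    · simp at key
    · intro x y hxy hne
      have hxy' := ((fromRel_adj _ _ _).mp hxy).2
      rcases hxy' with (⟨j, rfl, rfl⟩ | ⟨e, rfl, rfl⟩) | (⟨j, rfl, rfl⟩ | ⟨e, rfl, rfl⟩)
      · have hji : j ≠ i := by rintro rfl; exact hne rfl
        simp only [Sum.elim_inl, id_eq]
        exact decide_eq_decide.mpr (by omega)
      · simp
        exact decide_eq_decide.mpr Iff.rfl
      · have hji : j ≠ i := by rintro rfl; exact hne (Sym2.eq_swap)
        simp only [Sum.elim_inl, id_eq]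
        exact decide_eq_decide.mpr (by omega)
      · simp
        exact decide_eq_decide.mpr Iff.rfl
  · have key := walk_invariant (G := cat f) (fun x => x = inr e)
      s(inl (f e), inr e) ?_ p hmem
    · simp at key
    · intro x y hxy hne
      have hxy' := ((fromRel_adj _ _ _).mp hxy).2
      rcases hxy' with (⟨j, rfl, rfl⟩ | ⟨e', rfl, rfl⟩) | (⟨j, rfl, rfl⟩ | ⟨e', rfl, rfl⟩)
      · simp
      · have he : e' ≠ e := by rintro rfl; exact hne rfl
        simp [he]
      · simp
      · have he : e' ≠ e := by rintro rfl; exact hne Sym2.eq_swap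
        simp [he]

lemma cat_acyclic (f : E → ℕ) : (cat f).IsAcyclic := by
  rw [isAcyclic_iff_forall_adj_isBridge]
  intro a b hab
  rw [isBridge_iff_adj_and_forall_walk_mem_edges]
  refine fun p => ?_
  by_contra hmem
  rcases ((fromRel_adj _ _ _).mp hab).2 with h | h
  · exact cat_walk_bad f h p hmem
  · refine cat_walk_bad f h p.reverse ?_
    rw [Walk.edges_reverse, List.mem_reverse, Sym2.eq_swap]
    exact hmem

lemma exists_walk_seg (f : E → ℕ) (a b : ℕ) (hab : a ≤ b) :
    ∃ w : (cat f).Walk (inl a) (inl b),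
      ∀ x ∈ w.support, ∃ t, x = inl t ∧ a ≤ t ∧ t ≤ b := by
  induction b, hab using Nat.le_induction with
  | base => exact ⟨Walk.nil, by simp⟩
  | succ b hab ih =>
    obtain ⟨w, hw⟩ := ih
    refine ⟨w.concat (cat_adj_succ f b), ?_⟩
    intro x hx
    rw [Walk.support_concat, List.mem_append] at hx
    rcases hx with hx | hx
    · obtain ⟨t, rfl, h1, h2⟩ := hw x hx
      exact ⟨t, rfl, h1, by omega⟩
    · simp at hx
      exact ⟨b + 1, hx, by omega, le_refl _⟩

lemma hub_walks {V' : Type} {G : SimpleGraph V'} (S : Set V') (hub : V')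
    (h : ∀ y ∈ S, ∃ w : G.Walk y hub, ∀ x ∈ w.support, x ∈ S) {i j : V'}
    (hi : i ∈ S) (hj : j ∈ S) :
    ∃ w : G.Walk i j, ∀ x ∈ w.support, x ∈ S := by
  obtain ⟨w1, h1⟩ := h i hi
  obtain ⟨w2, h2⟩ := h j hj
  refine ⟨w1.append w2.reverse, ?_⟩
  intro x hx
  rw [Walk.support_append, List.mem_append] at hx
  rcases hx with hx | hx
  · exact h1 x hx
  · have hx' := List.mem_of_mem_tail hx
    rw [Walk.support_reverse, List.mem_reverse] at hx'
    exact h2 x hx'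

lemma acyclic_path_support {V' : Type} {G : SimpleGraph V'} (hG : G.IsAcyclic)
    {i j : V'} (p : G.Path i j) (S : Set V') (w : G.Walk i j)
    (hw : ∀ x ∈ w.support, x ∈ S) : ∀ x ∈ p.1.support, x ∈ S := by
  letI := Classical.decEq V'
  have hp : p = w.toPath := hG.path_unique _ _
  intro x hx
  rw [hp] at hx
  exact hw x (Walk.support_toPath_subset w hx)

end Caterpillar

section Bags
variable {V E : Type} (mem : V → E → Prop) (idx : V → ℕ) (tp : E → ℕ)

/-- The cut just left of position `t`: hyperedges with a vertex of index `< t`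
and one of index `≥ t`. -/
def CutN (t : ℕ) : Set E := {e | ∃ v w, mem v e ∧ mem w e ∧ idx v < t ∧ t ≤ idx w}

/-- The set of maximal vertices of a hyperedge. -/
def maxSet (e : E) : Set V := {v | mem v e ∧ ∀ w, mem w e → idx w ≤ idx v}

/-- The bags of the caterpillar tree decomposition. -/
def bags : (ℕ ⊕ E) → Set (V ⊕ E)
  | inl t => Sum.inl '' {v | idx v = t / 2} ∪ Sum.inr '' CutN mem idx ((t + 1) / 2)
  | inr e => {Sum.inr e} ∪ Sum.inl '' maxSet mem idx e

lemma mem_bags_inl_inl {v : V} {t : ℕ} :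
    Sum.inl v ∈ bags mem idx (inl t) ↔ idx v = t / 2 := by
  simp [bags]

lemma mem_bags_inl_inr {e : E} {t : ℕ} :
    Sum.inr e ∈ bags mem idx (inl t) ↔ e ∈ CutN mem idx ((t + 1) / 2) := by
  simp [bags]

lemma mem_bags_inr_inl {v : V} {e : E} :
    Sum.inl v ∈ bags mem idx (inr e) ↔ v ∈ maxSet mem idx e := by
  simp [bags]

lemma mem_bags_inr_inr {e e' : E} :
    Sum.inr e ∈ bags mem idx (inr e') ↔ e = e' := by
  simp [bags, eq_comm]

lemma cutN_interval {e : E} {s₁ s s₂ : ℕ} (h1 : e ∈ CutN mem idx s₁)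
    (h2 : e ∈ CutN mem idx s₂) (hs1 : s₁ ≤ s) (hs2 : s ≤ s₂) : e ∈ CutN mem idx s := by
  obtain ⟨v, _, hv, _, hv2, _⟩ := h1
  obtain ⟨_, w, _, hw, _, hw2⟩ := h2
  exact ⟨v, w, hv, hw, by omega, by omega⟩

lemma bags_walk (hinj : Function.Injective idx)
    (htp : ∀ e, (∃ v, mem v e) →
      (∃ u, mem u e ∧ idx u = tp e) ∧ (∀ w, mem w e → idx w ≤ tp e))
    (x : V ⊕ E) {i j : ℕ ⊕ E}
    (hi : x ∈ bags mem idx i) (hj : x ∈ bags mem idx j) :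
    ∃ w : (cat (fun e => 2 * tp e)).Walk i j, ∀ z ∈ w.support, x ∈ bags mem idx z := by
  set f : E → ℕ := fun e => 2 * tp e with hf
  set S : Set (ℕ ⊕ E) := {z | x ∈ bags mem idx z} with hS
  cases x with
  | inl v =>
    refine hub_walks S (inl (2 * idx v)) ?_ hi hj
    intro y hy
    cases y with
    | inl t =>
      have ht : idx v = t / 2 := (mem_bags_inl_inl mem idx).mp hy
      have hcase : t = 2 * idx v ∨ t = 2 * idx v + 1 := by omega
      have hhub : inl (α := ℕ) (β := E) (2 * idx v) ∈ S := by
        refine (mem_bags_inl_inl mem idx).mpr (by omega)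
      rcases hcase with rfl | rfl
      · exact ⟨Walk.nil, by intro z hz; simp at hz; rw [hz]; exact hhub⟩
      · refine ⟨Walk.cons (cat_adj_succ f (2 * idx v)).symm Walk.nil, ?_⟩
        intro z hz
        simp [Walk.support_cons] at hz
        rcases hz with rfl | rfl
        · exact hy
        · exact hhub
    | inr e =>
      have hy' : v ∈ maxSet mem idx e := (mem_bags_inr_inl mem idx).mp hy
      obtain ⟨⟨u, hu, hue⟩, hbd⟩ := htp e ⟨v, hy'.1⟩
      have htpv : tp e = idx v := le_antisymm (hue ▸ hy'.2 u hu) (hbd v hy'.1)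
      have hfe : f e = 2 * idx v := by show 2 * tp e = 2 * idx v; omega
      have hhub : inl (α := ℕ) (β := E) (2 * idx v) ∈ S :=
        (mem_bags_inl_inl mem idx).mpr (by omega)
      rw [← hfe]
      refine ⟨Walk.cons (cat_adj_leaf f e).symm Walk.nil, ?_⟩
      intro z hz
      simp [Walk.support_cons] at hz
      rcases hz with rfl | rfl
      · exact hy
      · rw [hfe]; exact hhub
  | inr e =>
    by_cases hcut : ∃ s, e ∈ CutN mem idx s
    · obtain ⟨s, hsmem⟩ := hcut
      obtain ⟨v0, w0, hv0, hw0, h1, h2⟩ := hsmem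
      obtain ⟨⟨u, hu, hue⟩, hbd⟩ := htp e ⟨w0, hw0⟩
      have hin : e ∈ CutN mem idx (tp e) := by
        refine ⟨v0, u, hv0, hu, ?_, by omega⟩
        have := hbd w0 hw0
        omega
      have hhub : inl (α := ℕ) (β := E) (2 * tp e) ∈ S := by
        refine (mem_bags_inl_inr mem idx).mpr ?_
        have : (2 * tp e + 1) / 2 = tp e := by omega
        rw [this]; exact hin
      refine hub_walks S (inl (2 * tp e)) ?_ hi hj
      intro y hy
      cases y with
      | inr e' =>
        have he' : e = e' := (mem_bags_inr_inr mem idx).mp hy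
        subst he'
        refine ⟨Walk.cons (cat_adj_leaf f e).symm Walk.nil, ?_⟩
        intro z hz
        simp [Walk.support_cons] at hz
        rcases hz with rfl | rfl
        · exact hy
        · exact hhub
      | inl t =>
        have hyt : e ∈ CutN mem idx ((t + 1) / 2) := (mem_bags_inl_inr mem idx).mp hy
        have htle : t ≤ 2 * tp e := by
          obtain ⟨v1, w1, _, hw1, _, hb⟩ := hyt
          have := hbd w1 hw1
          omega
        obtain ⟨w, hw⟩ := exists_walk_seg f t (2 * tp e) htle
        refine ⟨w, ?_⟩
        intro z hz
        obtain ⟨t', rfl, ht1, ht2⟩ := hw z hz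
        refine (mem_bags_inl_inr mem idx).mpr ?_
        refine cutN_interval mem idx hyt hin ?_ ?_
        · exact Nat.div_le_div_right (by omega)
        · omega
    · push_neg at hcut
      have hieq : i = inr e := by
        cases i with
        | inl t => exact absurd ((mem_bags_inl_inr mem idx).mp hi) (hcut _)
        | inr e' => rw [(mem_bags_inr_inr mem idx).mp hi]
      have hjeq : j = inr e := by
        cases j with
        | inl t => exact absurd ((mem_bags_inl_inr mem idx).mp hj) (hcut _)
        | inr e' => rw [(mem_bags_inr_inr mem idx).mp hj]
      subst hieq; subst hjeq
      exact ⟨Walk.nil, by intro z hz; simp at hz; rw [hz]; exact hi⟩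

lemma bags_encard (hinj : Function.Injective idx) (k : ℕ)
    (hcut : ∀ s, (CutN mem idx s).encard ≤ k) (i : ℕ ⊕ E) :
    (bags mem idx i).encard ≤ ((max k 1 : ℕ) : ℕ∞) + 1 := by
  have hk : ((k : ℕ∞)) ≤ ((max k 1 : ℕ) : ℕ∞) := Nat.cast_le.mpr (le_max_left _ _)
  have h1 : ((1 : ℕ∞)) ≤ ((max k 1 : ℕ) : ℕ∞) := by
    exact_mod_cast Nat.cast_le.mpr (le_max_right k 1)
  cases i with
  | inl t =>
    have hle : (bags mem idx (inl t)).encard ≤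
        (Sum.inl '' {v | idx v = t / 2} : Set (V ⊕ E)).encard +
        (Sum.inr '' CutN mem idx ((t + 1) / 2) : Set (V ⊕ E)).encard := by
      rw [bags]
      exact Set.encard_union_le _ _
    have hA : (Sum.inl '' {v | idx v = t / 2} : Set (V ⊕ E)).encard ≤ 1 := by
      rw [Sum.inl_injective.encard_image]
      refine Set.encard_le_one_iff.mpr ?_
      intro a b ha hb
      exact hinj (ha.trans hb.symm)
    have hB : (Sum.inr '' CutN mem idx ((t + 1) / 2) : Set (V ⊕ E)).encard ≤ k := by
      rw [Sum.inr_injective.encard_image]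
      exact hcut _
    calc (bags mem idx (inl t)).encard ≤ _ + _ := hle
      _ ≤ 1 + (k : ℕ∞) := add_le_add hA hB
      _ = (k : ℕ∞) + 1 := by rw [add_comm]
      _ ≤ _ + 1 := add_le_add_left hk 1
  | inr e =>
    have hle : (bags mem idx (inr e)).encard ≤
        ({Sum.inr e} : Set (V ⊕ E)).encard +
        (Sum.inl '' maxSet mem idx e : Set (V ⊕ E)).encard := by
      rw [bags]
      exact Set.encard_union_le _ _
    have hA : ({Sum.inr e} : Set (V ⊕ E)).encard ≤ 1 := by simp
    have hB : (Sum.inl '' maxSet mem idx e : Set (V ⊕ E)).encard ≤ 1 := by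
      rw [Sum.inl_injective.encard_image]
      refine Set.encard_le_one_iff.mpr ?_
      rintro a b ⟨ha1, ha2⟩ ⟨hb1, hb2⟩
      exact hinj (le_antisymm (hb2 a ha1) (ha2 b hb1))
    calc (bags mem idx (inr e)).encard ≤ _ + _ := hle
      _ ≤ 1 + (1 : ℕ∞) := add_le_add hA hB
      _ ≤ _ + 1 := add_le_add_left h1 1

end Bags

/-- if a (finite) hypergraph has cutwidth at most `k`, then the
treewidth of its incidence graph is at most `max k 1`. -/
theorem cutwidth_le_incidence_treewidth (H : Hypergraph') [Fintype H.V] [Fintype H.E]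
    (k : ℕ) (hcw : H.cutwidthAtMost k) :
    treewidth H.incidenceGraph ≤ (max k 1 : ℕ) := by
  obtain ⟨l, linj, hcw⟩ := hcw
  letI : LinearOrder H.V := LinearOrder.lift' l linj
  set n := Fintype.card H.V with hn
  set φ := monoEquivOfFin H.V hn.symm with hφ
  set idx : H.V → ℕ := fun v => (φ.symm v : ℕ) with hidx
  have hidx_inj : Function.Injective idx := by
    intro a b h
    exact φ.symm.injective (Fin.ext h)
  have hidx_lt : ∀ v, idx v < n := fun v => (φ.symm v).isLt
  set tp : H.E → ℕ := fun e => sSup (idx '' {v | H.mem v e}) with htpdef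
  have htp : ∀ e, (∃ v, H.mem v e) →
      (∃ u, H.mem u e ∧ idx u = tp e) ∧ (∀ w, H.mem w e → idx w ≤ tp e) := by
    rintro e ⟨v, hv⟩
    have hfin : (idx '' {v | H.mem v e}).Finite := (Set.toFinite _).image _
    have hne : (idx '' {v | H.mem v e}).Nonempty := ⟨idx v, v, hv, rfl⟩
    obtain ⟨u, hu, hue⟩ := hne.csSup_mem hfin
    exact ⟨⟨u, hu, hue⟩, fun w hw => le_csSup hfin.bddAbove ⟨w, hw, rfl⟩⟩
  have hcutb : ∀ s, (CutN H.mem idx s).encard ≤ k := by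
    intro s
    rcases Set.eq_empty_or_nonempty (CutN H.mem idx s) with h | ⟨e0, v0, w0, hv0, hw0, h1, h2⟩
    · simp [h]
    · have hs1 : 1 ≤ s := by omega
      have hsn : s < n := by have := hidx_lt w0; omega
      set a := φ ⟨s - 1, by omega⟩ with ha
      set b := φ ⟨s, hsn⟩ with hb
      have hab : l a < l b := by
        have h' : a < b := by
          apply φ.strictMono
          rw [Fin.lt_def]
          simp
          omega
        exact h'
      set ρ := (l a + l b) / 2 with hρ
      have hsub : CutN H.mem idx s ⊆ H.cutAt l ρ := by
        rintro e ⟨v, w, hv, hw, hvs, hws⟩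
        have hva : l v ≤ l a := by
          have hv' : φ.symm v ≤ φ.symm a := by
            have hd : idx v = ((φ.symm v : Fin n) : ℕ) := rfl
            rw [ha, φ.symm_apply_apply, Fin.le_def]
            simp
            omega
          have : v ≤ a := φ.symm.le_iff_le.mp hv'
          exact this
        have hwb : l b ≤ l w := by
          have hw' : φ.symm b ≤ φ.symm w := by
            have hd : idx w = ((φ.symm w : Fin n) : ℕ) := rfl
            rw [hb, φ.symm_apply_apply, Fin.le_def]
            simp
            omega
          have : b ≤ w := φ.symm.le_iff_le.mp hw'
          exact this
        exact ⟨v, w, hv, hw, by rw [hρ]; linarith, by rw [hρ]; linarith⟩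
      exact le_trans (Set.encard_mono hsub) (hcw ρ)
  set D : TreeDecomp H.incidenceGraph :=
    { ι := ℕ ⊕ H.E
      tree := cat (fun e => 2 * tp e)
      isTree := ⟨cat_connected _, cat_acyclic _⟩
      bag := bags H.mem idx
      bag_vertex := by
        rintro (v | e)
        · exact ⟨inl (2 * idx v), (mem_bags_inl_inl H.mem idx).mpr (by omega)⟩
        · exact ⟨inr e, (mem_bags_inr_inr H.mem idx).mpr rfl⟩
      bag_edge := by
        have key : ∀ (v : H.V) (e : H.E), H.mem v e →
            ∃ i, Sum.inl v ∈ bags H.mem idx i ∧ Sum.inr e ∈ bags H.mem idx i := by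
          intro v e hm
          by_cases hmax : ∀ w, H.mem w e → idx w ≤ idx v
          · exact ⟨inr e, (mem_bags_inr_inl H.mem idx).mpr ⟨hm, hmax⟩,
              (mem_bags_inr_inr H.mem idx).mpr rfl⟩
          · push_neg at hmax
            obtain ⟨w, hw, hwi⟩ := hmax
            refine ⟨inl (2 * idx v + 1), (mem_bags_inl_inl H.mem idx).mpr (by omega),
              (mem_bags_inl_inr H.mem idx).mpr ?_⟩
            exact ⟨v, w, hm, hw, by omega, by omega⟩
        intro u v hadj
        rw [Hypergraph'.incidenceGraph, fromRel_adj] at hadj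
        rcases hadj.2 with ⟨v', e', rfl, rfl, hm⟩ | ⟨v', e', rfl, rfl, hm⟩
        · exact key v' e' hm
        · obtain ⟨i, h1, h2⟩ := key v' e' hm
          exact ⟨i, h2, h1⟩
      bag_connected := by
        intro x i j p hi hj
        obtain ⟨w, hw⟩ := bags_walk H.mem idx tp hidx_inj htp x hi hj
        exact acyclic_path_support (cat_acyclic _) p _ w hw }
  refine le_trans (iInf_le _ D) ?_
  refine iSup_le ?_
  intro i
  refine tsub_le_iff_right.mpr ?_
  exact bags_encard H.mem idx hidx_inj k hcutb i
end

section
/- Any finite sequence of natural numbers bounded by k to which none of the following three reduction rules applies has length at most 2k + 2: (R1) delete the middle of any three consecutive entries that are monotonically nondecreasing or nonincreasing; (R2) replace any maximal block of consecutive entries all at least max(a,b), where a and b are the entries immediately before and after the block, by a single entry equal to the block's maximum; (R3) symmetrically for blocks of entries all at most min(a,b), replaced by the block's minimum. -/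
/-- Rule (R1) applies to the sequence `w` of length `m`: some three consecutive
entries are monotonically nondecreasing or nonincreasing (so the middle one
could be deleted). -/
def R1Applies (m : ℕ) (w : ℕ → ℕ) : Prop :=
  ∃ i, i + 2 < m ∧
    ((w i ≤ w (i + 1) ∧ w (i + 1) ≤ w (i + 2)) ∨
     (w (i + 2) ≤ w (i + 1) ∧ w (i + 1) ≤ w i))

/-- Rule (R2) applies: there is a block `w i, …, w j` of length at least two,
with entries `a = w (i-1)` and `b = w (j+1)` immediately before and after it,
all of whose entries are at least `max a b` (so it could be replaced by a
single entry, its maximum). -/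
def R2Applies (m : ℕ) (w : ℕ → ℕ) : Prop :=
  ∃ i j, 0 < i ∧ i < j ∧ j + 1 < m ∧
    ∀ l, i ≤ l → l ≤ j → max (w (i - 1)) (w (j + 1)) ≤ w l

/-- Rule (R3) applies: symmetrically, a block of length at least two all of
whose entries are at most `min a b` (replaceable by its minimum). -/
def R3Applies (m : ℕ) (w : ℕ → ℕ) : Prop :=
  ∃ i j, 0 < i ∧ i < j ∧ j + 1 < m ∧
    ∀ l, i ≤ l → l ≤ j → w l ≤ min (w (i - 1)) (w (j + 1))

namespace IrredAux

variable {m : ℕ} {w : ℕ → ℕ}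

/-- `i` is a (generalized) valley: smaller than both existing neighbours. -/
def Vty (m : ℕ) (w : ℕ → ℕ) (i : ℕ) : Prop :=
  (∀ j, j + 1 = i → w i < w j) ∧ (i + 1 < m → w i < w (i + 1))

/-- `i` is a (generalized) peak: larger than both existing neighbours. -/
def Pty (m : ℕ) (w : ℕ → ℕ) (i : ℕ) : Prop :=
  (∀ j, j + 1 = i → w j < w i) ∧ (i + 1 < m → w (i + 1) < w i)

lemma alt (h1 : ¬ R1Applies m w) :
    ∀ i, i + 2 < m →
      (w i < w (i+1) ∧ w (i+2) < w (i+1)) ∨ (w (i+1) < w i ∧ w (i+1) < w (i+2)) := by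
  intro i hi
  by_contra h
  exact h1 ⟨i, hi, by omega⟩

lemma VorP (h1 : ¬ R1Applies m w) (hm : 3 ≤ m) :
    ∀ i, i < m → Vty m w i ∨ Pty m w i := by
  intro i hi
  rcases Nat.eq_zero_or_pos i with rfl | hpos
  · rcases alt h1 0 (by omega) with ⟨ha, _⟩ | ⟨ha, _⟩
    · exact Or.inl ⟨fun j hj => by omega, fun _ => ha⟩
    · exact Or.inr ⟨fun j hj => by omega, fun _ => ha⟩
  · rcases Nat.lt_or_ge (i+1) m with him | him
    · have hi1 : i - 1 + 2 < m := by omega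
      rcases alt h1 (i-1) hi1 with ⟨ha, hb⟩ | ⟨ha, hb⟩
      · right
        have e1 : i - 1 + 1 = i := by omega
        have e2 : i - 1 + 2 = i + 1 := by omega
        rw [e1] at ha hb; rw [e2] at hb
        refine ⟨fun j hj => ?_, fun _ => hb⟩
        have : j = i - 1 := by omega
        subst this; exact ha
      · left
        have e1 : i - 1 + 1 = i := by omega
        have e2 : i - 1 + 2 = i + 1 := by omega
        rw [e1] at ha hb; rw [e2] at hb
        refine ⟨fun j hj => ?_, fun _ => hb⟩
        have : j = i - 1 := by omega
        subst this; exact ha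
    · -- i = m - 1
      have hi2 : i - 2 + 2 < m := by omega
      rcases alt h1 (i-2) hi2 with ⟨ha, hb⟩ | ⟨ha, hb⟩
      · left
        have e1 : i - 2 + 1 = i - 1 := by omega
        have e2 : i - 2 + 2 = i := by omega
        rw [e1] at ha hb; rw [e2] at hb
        refine ⟨fun j hj => ?_, fun h => absurd h (by omega)⟩
        have : j = i - 1 := by omega
        subst this; exact hb
      · right
        have e1 : i - 2 + 1 = i - 1 := by omega
        have e2 : i - 2 + 2 = i := by omega
        rw [e1] at ha hb; rw [e2] at hb
        refine ⟨fun j hj => ?_, fun h => absurd h (by omega)⟩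
        have : j = i - 1 := by omega
        subst this; exact hb

lemma Vstep (h1 : ¬ R1Applies m w) {a : ℕ} (ha : Vty m w a) (h2m : a + 2 < m) :
    Vty m w (a + 2) := by
  have hm : 3 ≤ m := by omega
  have hw1 : w a < w (a+1) := ha.2 (by omega)
  have hstep : w (a+2) < w (a+1) := by
    rcases VorP h1 hm (a+1) (by omega) with hv | hp
    · exact absurd (hv.1 a (by omega)) (by omega)
    · exact hp.2 (by omega)
  rcases VorP h1 hm (a+2) (by omega) with hv | hp
  · exact hv
  · exact absurd (hp.1 (a+1) (by omega)) (by omega)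

lemma Pstep (h1 : ¬ R1Applies m w) {a : ℕ} (ha : Pty m w a) (h2m : a + 2 < m) :
    Pty m w (a + 2) := by
  have hm : 3 ≤ m := by omega
  have hw1 : w (a+1) < w a := ha.2 (by omega)
  have hstep : w (a+1) < w (a+2) := by
    rcases VorP h1 hm (a+1) (by omega) with hv | hp
    · exact hv.2 (by omega)
    · exact absurd (hp.1 a (by omega)) (by omega)
  rcases VorP h1 hm (a+2) (by omega) with hv | hp
  · exact absurd (hv.1 (a+1) (by omega)) (by omega)
  · exact hp

lemma Viter (h1 : ¬ R1Applies m w) {a : ℕ} (ha : Vty m w a) :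
    ∀ n, a + 2 * n < m → Vty m w (a + 2 * n) := by
  intro n
  induction n with
  | zero => intro _; simpa using ha
  | succ n ih =>
    intro hn
    have e : a + 2 * (n + 1) = a + 2 * n + 2 := by ring
    rw [e] at hn ⊢
    exact Vstep h1 (ih (by omega)) hn

lemma Piter (h1 : ¬ R1Applies m w) {a : ℕ} (ha : Pty m w a) :
    ∀ n, a + 2 * n < m → Pty m w (a + 2 * n) := by
  intro n
  induction n with
  | zero => intro _; simpa using ha
  | succ n ih =>
    intro hn
    have e : a + 2 * (n + 1) = a + 2 * n + 2 := by ring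
    rw [e] at hn ⊢
    exact Pstep h1 (ih (by omega)) hn

lemma Vtriple (h1 : ¬ R1Applies m w) (h2 : ¬ R2Applies m w) {a : ℕ}
    (ha : Vty m w a) (h4 : a + 4 < m)
    (hl : w a ≤ w (a+2)) (hr : w (a+4) ≤ w (a+2)) : False := by
  have v2 : Vty m w (a+2) := Vstep h1 ha (by omega)
  have hw1 : w (a+2) < w (a+1) := v2.1 (a+1) (by omega)
  have hw3 : w (a+2) < w (a+3) := v2.2 (by omega)
  apply h2
  refine ⟨a+1, a+3, by omega, by omega, by omega, ?_⟩
  intro l hl1 hl2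
  have e : a + 1 - 1 = a := by omega
  have e2 : a + 3 + 1 = a + 4 := by omega
  rw [e, e2, max_le_iff]
  have : l = a+1 ∨ l = a+2 ∨ l = a+3 := by omega
  rcases this with rfl | rfl | rfl <;> omega

lemma Ptriple (h1 : ¬ R1Applies m w) (h3 : ¬ R3Applies m w) {a : ℕ}
    (ha : Pty m w a) (h4 : a + 4 < m)
    (hl : w (a+2) ≤ w a) (hr : w (a+2) ≤ w (a+4)) : False := by
  have p2 : Pty m w (a+2) := Pstep h1 ha (by omega)
  have hw1 : w (a+1) < w (a+2) := p2.1 (a+1) (by omega)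
  have hw3 : w (a+3) < w (a+2) := p2.2 (by omega)
  apply h3
  refine ⟨a+1, a+3, by omega, by omega, by omega, ?_⟩
  intro l hl1 hl2
  have e : a + 1 - 1 = a := by omega
  have e2 : a + 3 + 1 = a + 4 := by omega
  rw [e, e2, le_min_iff]
  have : l = a+1 ∨ l = a+2 ∨ l = a+3 := by omega
  rcases this with rfl | rfl | rfl <;> omega

lemma Vascend (h1 : ¬ R1Applies m w) (h2 : ¬ R2Applies m w) {a : ℕ}
    (ha : Vty m w a) (hup : w a ≤ w (a+2)) :
    ∀ n, a + 2 * n + 2 < m →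
      w (a + 2*n) ≤ w (a + 2*n + 2) ∧ (1 ≤ n → w (a + 2*n) < w (a + 2*n + 2)) := by
  intro n
  induction n with
  | zero =>
    intro _
    constructor
    · simpa using hup
    · omega
  | succ n ih =>
    intro hn
    have e : a + 2 * (n + 1) = a + 2 * n + 2 := by ring
    rw [e] at hn ⊢
    have hprev : w (a + 2*n) ≤ w (a + 2*n + 2) := (ih (by omega)).1
    have hVn : Vty m w (a + 2*n) := Viter h1 ha n (by omega)
    have hstrict : w (a + 2*n + 2) < w (a + 2*n + 2 + 2) := by
      by_contra hc
      have e4 : a + 2*n + 4 = a + 2*n + 2 + 2 := by omega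
      exact Vtriple h1 h2 hVn (by omega) hprev (by rw [e4]; omega)
    exact ⟨le_of_lt hstrict, fun _ => hstrict⟩

lemma Pascend (h1 : ¬ R1Applies m w) (h3 : ¬ R3Applies m w) {a : ℕ}
    (ha : Pty m w a) (hup : w (a+2) ≤ w a) :
    ∀ n, a + 2 * n + 2 < m →
      w (a + 2*n + 2) ≤ w (a + 2*n) ∧ (1 ≤ n → w (a + 2*n + 2) < w (a + 2*n)) := by
  intro n
  induction n with
  | zero =>
    intro _
    constructor
    · simpa using hup
    · omega
  | succ n ih =>
    intro hn
    have e : a + 2 * (n + 1) = a + 2 * n + 2 := by ring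
    rw [e] at hn ⊢
    have hprev : w (a + 2*n + 2) ≤ w (a + 2*n) := (ih (by omega)).1
    have hPn : Pty m w (a + 2*n) := Piter h1 ha n (by omega)
    have hstrict : w (a + 2*n + 2 + 2) < w (a + 2*n + 2) := by
      by_contra hc
      have e4 : a + 2*n + 4 = a + 2*n + 2 + 2 := by omega
      exact Ptriple h1 h3 hPn (by omega) hprev (by rw [e4]; omega)
    exact ⟨le_of_lt hstrict, fun _ => hstrict⟩

lemma Vmono (h1 : ¬ R1Applies m w) (h2 : ¬ R2Applies m w) {a : ℕ}
    (ha : Vty m w a) (hup : w a ≤ w (a+2)) :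
    ∀ s t, 1 ≤ s → s < t → a + 2 * t < m → w (a + 2*s) < w (a + 2*t) := by
  intro s t hs hst
  induction t with
  | zero => omega
  | succ t ih =>
    intro hm'
    have estep : w (a + 2*t) < w (a + 2*(t+1)) := by
      have e : a + 2 * (t+1) = a + 2*t + 2 := by ring
      rw [e]
      exact (Vascend h1 h2 ha hup t (by omega)).2 (by omega)
    rcases Nat.lt_or_ge s t with h | h
    · exact lt_trans (ih h (by omega)) estep
    · have : s = t := by omega
      subst this; exact estep

lemma Pmono (h1 : ¬ R1Applies m w) (h3 : ¬ R3Applies m w) {a : ℕ}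
    (ha : Pty m w a) (hup : w (a+2) ≤ w a) :
    ∀ s t, 1 ≤ s → s < t → a + 2 * t < m → w (a + 2*t) < w (a + 2*s) := by
  intro s t hs hst
  induction t with
  | zero => omega
  | succ t ih =>
    intro hm'
    have estep : w (a + 2*(t+1)) < w (a + 2*t) := by
      have e : a + 2 * (t+1) = a + 2*t + 2 := by ring
      rw [e]
      exact (Pascend h1 h3 ha hup t (by omega)).2 (by omega)
    rcases Nat.lt_or_ge s t with h | h
    · exact lt_trans estep (ih h (by omega))
    · have : s = t := by omega
      subst this; exact estep

lemma Vspacing (h1 : ¬ R1Applies m w) :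
    ∀ d x y, y = x + d → Vty m w x → Vty m w y → 0 < d → y < m → ∃ n, d = 2 * n := by
  intro d
  induction d using Nat.strong_induction_on with
  | _ d IH =>
    intro x y hxy hx hy hd hym
    subst hxy
    rcases Nat.lt_or_ge d 3 with hd3 | hd3
    · interval_cases d
      · -- d = 1
        exfalso
        have h1' : w x < w (x+1) := hx.2 (by omega)
        have h2' : w (x + 1) < w x := hy.1 x (by omega)
        omega
      · exact ⟨1, rfl⟩
    · have hx2 : Vty m w (x + 2) := Vstep h1 hx (by omega)
      obtain ⟨n, hn⟩ := IH (d - 2) (by omega) (x+2) (x+d) (by omega) hx2 hy (by omega) hym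
      exact ⟨n + 1, by omega⟩

lemma Pspacing (h1 : ¬ R1Applies m w) :
    ∀ d x y, y = x + d → Pty m w x → Pty m w y → 0 < d → y < m → ∃ n, d = 2 * n := by
  intro d
  induction d using Nat.strong_induction_on with
  | _ d IH =>
    intro x y hxy hx hy hd hym
    subst hxy
    rcases Nat.lt_or_ge d 3 with hd3 | hd3
    · interval_cases d
      · exfalso
        have h1' : w (x+1) < w x := hx.2 (by omega)
        have h2' : w x < w (x + 1) := hy.1 x (by omega)
        omega
      · exact ⟨1, rfl⟩
    · have hx2 : Pty m w (x + 2) := Pstep h1 hx (by omega)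
      obtain ⟨n, hn⟩ := IH (d - 2) (by omega) (x+2) (x+d) (by omega) hx2 hy (by omega) hym
      exact ⟨n + 1, by omega⟩

/-- Key lemma for valleys: no valley is weakly above two valleys on each side. -/
lemma KeyV (h1 : ¬ R1Applies m w) (h2 : ¬ R2Applies m w) {p q r : ℕ}
    (hp : Vty m w p) (hq : Vty m w q) (hr : Vty m w r)
    (hpq : p < q) (hqr : q < r) (hrm : r < m)
    (h₁ : w p ≤ w q) (h₂ : w r ≤ w q) : False := by
  obtain ⟨i, hi⟩ := Vspacing h1 (q - p) p q (by omega) hp hq (by omega) (by omega)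
  obtain ⟨j, hj⟩ := Vspacing h1 (r - q) q r (by omega) hq hr (by omega) hrm
  have hi1 : 1 ≤ i := by omega
  have hj1 : 1 ≤ j := by omega
  -- find an ascent among the first i steps
  have hasc : ∃ n, n < i ∧ w (p + 2*n) ≤ w (p + 2*n + 2) := by
    by_contra hc
    push_neg at hc
    have desc : ∀ n, n ≤ i → 0 < n → w (p + 2*n) < w p := by
      intro n
      induction n with
      | zero => omega
      | succ n ih =>
        intro hni _
        have hstep : w (p + 2*n + 2) < w (p + 2*n) := hc n (by omega)
        have e : p + 2 * (n+1) = p + 2*n + 2 := by ring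
        rw [e]
        rcases Nat.eq_zero_or_pos n with rfl | hn0
        · simpa using hstep
        · exact lt_trans hstep (ih (by omega) hn0)
    have := desc i le_rfl (by omega)
    have eq : p + 2 * i = q := by omega
    rw [eq] at this
    omega
  obtain ⟨n₀, hn₀i, hn₀⟩ := hasc
  set a := p + 2 * n₀ with hadef
  have haV : Vty m w a := Viter h1 hp n₀ (by omega)
  have hup : w a ≤ w (a + 2) := by
    have : a + 2 = p + 2*n₀ + 2 := by omega
    rw [this]; exact hn₀
  have hqa : q = a + 2 * (i - n₀) := by omega
  have hra : r = a + 2 * (i - n₀ + j) := by omega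
  have := Vmono h1 h2 haV hup (i - n₀) (i - n₀ + j) (by omega) (by omega)
    (by rw [← hra]; exact hrm)
  rw [← hqa, ← hra] at this
  omega

/-- Key lemma for peaks: no peak is weakly below two peaks on each side. -/
lemma KeyP (h1 : ¬ R1Applies m w) (h3 : ¬ R3Applies m w) {p q r : ℕ}
    (hp : Pty m w p) (hq : Pty m w q) (hr : Pty m w r)
    (hpq : p < q) (hqr : q < r) (hrm : r < m)
    (h₁ : w q ≤ w p) (h₂ : w q ≤ w r) : False := by
  obtain ⟨i, hi⟩ := Pspacing h1 (q - p) p q (by omega) hp hq (by omega) (by omega)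
  obtain ⟨j, hj⟩ := Pspacing h1 (r - q) q r (by omega) hq hr (by omega) hrm
  have hi1 : 1 ≤ i := by omega
  have hj1 : 1 ≤ j := by omega
  have hasc : ∃ n, n < i ∧ w (p + 2*n + 2) ≤ w (p + 2*n) := by
    by_contra hc
    push_neg at hc
    have desc : ∀ n, n ≤ i → 0 < n → w p < w (p + 2*n) := by
      intro n
      induction n with
      | zero => omega
      | succ n ih =>
        intro hni _
        have hstep : w (p + 2*n) < w (p + 2*n + 2) := hc n (by omega)
        have e : p + 2 * (n+1) = p + 2*n + 2 := by ring
        rw [e]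
        rcases Nat.eq_zero_or_pos n with rfl | hn0
        · simpa using hstep
        · exact lt_trans (ih (by omega) hn0) hstep
    have := desc i le_rfl (by omega)
    have eq : p + 2 * i = q := by omega
    rw [eq] at this
    omega
  obtain ⟨n₀, hn₀i, hn₀⟩ := hasc
  set a := p + 2 * n₀ with hadef
  have haP : Pty m w a := Piter h1 hp n₀ (by omega)
  have hup : w (a + 2) ≤ w a := by
    have : a + 2 = p + 2*n₀ + 2 := by omega
    rw [this]; exact hn₀
  have hqa : q = a + 2 * (i - n₀) := by omega
  have hra : r = a + 2 * (i - n₀ + j) := by omega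
  have := Pmono h1 h3 haP hup (i - n₀) (i - n₀ + j) (by omega) (by omega)
    (by rw [← hra]; exact hrm)
  rw [← hqa, ← hra] at this
  omega

/-- No value occurs three times. -/
lemma mult (h1 : ¬ R1Applies m w) (h2 : ¬ R2Applies m w) (h3 : ¬ R3Applies m w)
    {p q r : ℕ} (hpq : p < q) (hqr : q < r) (hrm : r < m)
    (e1 : w p = w q) (e2 : w q = w r) : False := by
  have hm3 : 3 ≤ m := by omega
  have Hp := VorP h1 hm3 p (by omega)
  have Hq := VorP h1 hm3 q (by omega)
  have Hr := VorP h1 hm3 r (by omega)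
  -- helper facts constructed per case below
  rcases Hp with hPv | hPp <;> rcases Hq with hQv | hQp <;> rcases Hr with hRv | hRp
  · -- V V V
    exact KeyV h1 h2 hPv hQv hRv hpq hqr hrm (by omega) (by omega)
  · -- V V P
    have hr1 : w (r-1) < w r := hRp.1 (r-1) (by omega)
    have hqr1 : q < r - 1 := by
      rcases Nat.lt_or_ge q (r-1) with h | h
      · exact h
      · exfalso
        have : q = r - 1 := by omega
        subst this
        have := hQv.2 (by omega)
        have e : r - 1 + 1 = r := by omega
        rw [e] at this
        omega
    have hRv1 : Vty m w (r-1) := by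
      rcases VorP h1 hm3 (r-1) (by omega) with h | h
      · exact h
      · exfalso
        have := h.2 (by omega)
        have e : r - 1 + 1 = r := by omega
        rw [e] at this
        omega
    exact KeyV h1 h2 hPv hQv hRv1 hpq hqr1 (by omega) (by omega) (by omega)
  · -- V P V
    have hp1 : w p < w (p+1) := hPv.2 (by omega)
    have hpq1 : p + 1 < q := by
      rcases Nat.lt_or_ge (p+1) q with h | h
      · exact h
      · exfalso
        have : p + 1 = q := by omega
        subst this
        omega
    have hPp1 : Pty m w (p+1) := by
      rcases VorP h1 hm3 (p+1) (by omega) with h | h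
      · exact absurd (h.1 p (by omega)) (by omega)
      · exact h
    have hr1 : w r < w (r-1) := hRv.1 (r-1) (by omega)
    have hqr1 : q < r - 1 := by
      rcases Nat.lt_or_ge q (r-1) with h | h
      · exact h
      · exfalso
        have : q = r - 1 := by omega
        subst this
        omega
    have hRp1 : Pty m w (r-1) := by
      rcases VorP h1 hm3 (r-1) (by omega) with h | h
      · exfalso
        have := h.2 (by omega)
        have e : r - 1 + 1 = r := by omega
        rw [e] at this
        omega
      · exact h
    exact KeyP h1 h3 hPp1 hQp hRp1 hpq1 hqr1 (by omega) (by omega) (by omega)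
  · -- V P P
    have hp1 : w p < w (p+1) := hPv.2 (by omega)
    have hpq1 : p + 1 < q := by
      rcases Nat.lt_or_ge (p+1) q with h | h
      · exact h
      · exfalso
        have : p + 1 = q := by omega
        subst this
        omega
    have hPp1 : Pty m w (p+1) := by
      rcases VorP h1 hm3 (p+1) (by omega) with h | h
      · exact absurd (h.1 p (by omega)) (by omega)
      · exact h
    exact KeyP h1 h3 hPp1 hQp hRp hpq1 hqr hrm (by omega) (by omega)
  · -- P V V
    have hp1 : w (p+1) < w p := hPp.2 (by omega)
    have hpq1 : p + 1 < q := by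
      rcases Nat.lt_or_ge (p+1) q with h | h
      · exact h
      · exfalso
        have : p + 1 = q := by omega
        subst this
        omega
    have hVp1 : Vty m w (p+1) := by
      rcases VorP h1 hm3 (p+1) (by omega) with h | h
      · exact h
      · exact absurd (h.1 p (by omega)) (by omega)
    exact KeyV h1 h2 hVp1 hQv hRv hpq1 hqr hrm (by omega) (by omega)
  · -- P V P
    have hp1 : w (p+1) < w p := hPp.2 (by omega)
    have hpq1 : p + 1 < q := by
      rcases Nat.lt_or_ge (p+1) q with h | h
      · exact h
      · exfalso
        have : p + 1 = q := by omega
        subst this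
        omega
    have hVp1 : Vty m w (p+1) := by
      rcases VorP h1 hm3 (p+1) (by omega) with h | h
      · exact h
      · exact absurd (h.1 p (by omega)) (by omega)
    have hr1 : w (r-1) < w r := hRp.1 (r-1) (by omega)
    have hqr1 : q < r - 1 := by
      rcases Nat.lt_or_ge q (r-1) with h | h
      · exact h
      · exfalso
        have : q = r - 1 := by omega
        subst this
        omega
    have hRv1 : Vty m w (r-1) := by
      rcases VorP h1 hm3 (r-1) (by omega) with h | h
      · exact h
      · exfalso
        have := h.2 (by omega)
        have e : r - 1 + 1 = r := by omega
        rw [e] at this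
        omega
    exact KeyV h1 h2 hVp1 hQv hRv1 hpq1 hqr1 (by omega) (by omega) (by omega)
  · -- P P V
    have hr1 : w r < w (r-1) := hRv.1 (r-1) (by omega)
    have hqr1 : q < r - 1 := by
      rcases Nat.lt_or_ge q (r-1) with h | h
      · exact h
      · exfalso
        have : q = r - 1 := by omega
        subst this
        have := hQp.2 (by omega)
        have e : r - 1 + 1 = r := by omega
        rw [e] at this
        omega
    have hRp1 : Pty m w (r-1) := by
      rcases VorP h1 hm3 (r-1) (by omega) with h | h
      · exfalso
        have := h.2 (by omega)
        have e : r - 1 + 1 = r := by omega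
        rw [e] at this
        omega
      · exact h
    exact KeyP h1 h3 hPp hQp hRp1 hpq hqr1 (by omega) (by omega) (by omega)
  · -- P P P
    exact KeyP h1 h3 hPp hQp hRp hpq hqr hrm (by omega) (by omega)

end IrredAux

/-- any sequence `w 0, …, w (m-1)` of naturals bounded by `k` to
which none of the reduction rules (R1), (R2), (R3) applies has length at most
`2k + 2`. -/
theorem irreducible_sequence_short (k m : ℕ) (w : ℕ → ℕ)
    (hbound : ∀ i < m, w i ≤ k)
    (h1 : ¬ R1Applies m w) (h2 : ¬ R2Applies m w) (h3 : ¬ R3Applies m w) :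
    m ≤ 2 * k + 2 := by
  classical
  have hfib : ∀ b ∈ Finset.range (k+1),
      ((Finset.range m).filter (fun i => w i = b)).card ≤ 2 := by
    intro b _
    by_contra hcard
    push_neg at hcard
    rw [Finset.two_lt_card_iff] at hcard
    obtain ⟨x, y, z, hx, hy, hz, hxy, hxz, hyz⟩ := hcard
    simp only [Finset.mem_filter, Finset.mem_range] at hx hy hz
    have key : ∀ p q r, p < q → q < r → r < m → w p = b → w q = b → w r = b → False := by
      intro p q r h h' h'' ep eq' er
      exact IrredAux.mult h1 h2 h3 h h' h'' (by omega) (by omega)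
    have horder : (x<y∧y<z)∨(x<z∧z<y)∨(y<x∧x<z)∨(y<z∧z<x)∨(z<x∧x<y)∨(z<y∧y<x) := by
      omega
    rcases horder with ⟨h,h'⟩|⟨h,h'⟩|⟨h,h'⟩|⟨h,h'⟩|⟨h,h'⟩|⟨h,h'⟩
    · exact key x y z h h' hz.1 hx.2 hy.2 hz.2
    · exact key x z y h h' hy.1 hx.2 hz.2 hy.2
    · exact key y x z h h' hz.1 hy.2 hx.2 hz.2
    · exact key y z x h h' hx.1 hy.2 hz.2 hx.2
    · exact key z x y h h' hy.1 hz.2 hx.2 hy.2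
    · exact key z y x h h' hx.1 hz.2 hy.2 hx.2
  have hmaps : ∀ i ∈ Finset.range m, w i ∈ Finset.range (k+1) := by
    intro i hi
    simp only [Finset.mem_range] at hi ⊢
    exact Nat.lt_succ_of_le (hbound i hi)
  have hcard := Finset.card_le_mul_card_image_of_maps_to hmaps 2 hfib
  simp only [Finset.card_range] at hcard
  omega
end

section
/- Adding a universal hyperedge (containing all vertices) to any hypergraph yields a hypergraph of hypertree width one; hence there is a family of hypergraphs of hypertree width one with unbounded incidence treewidth. -/
open scoped ENNReal

/-- The primal (Gaifman) graph of a hypergraph: two distinct vertices are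
adjacent iff they lie together in some hyperedge. -/
def Hypergraph'.primal (H : Hypergraph') : SimpleGraph H.V :=
  SimpleGraph.fromRel (fun u v => ∃ e, H.mem u e ∧ H.mem v e)

/-- A set `F` of hyperedges covers a bag `b` if every vertex of `b` lies in
some hyperedge of `F`. -/
def Hypergraph'.Covers (H : Hypergraph') (b : Set H.V) (F : Set H.E) : Prop :=
  ∀ v ∈ b, ∃ e ∈ F, H.mem v e

/-- The generalized hypertree width of a hypergraph: the minimum, over all tree
decompositions of the primal graph, of the maximum over the bags of the minimum
number of hyperedges covering the bag. -/
noncomputable def ghtw (H : Hypergraph') : ℕ∞ :=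
  ⨅ (D : TreeDecomp H.primal), ⨆ i,
    ⨅ F ∈ {F : Set H.E | H.Covers (D.bag i) F}, F.encard

/-- `j` lies in the subtree rooted at `i` of the tree `tr` rooted at `r`:
`i` lies on every path from the root `r` to `j`. -/
def InSubtree {ι : Type} (tr : SimpleGraph ι) (r i j : ι) : Prop :=
  ∀ p : tr.Path r j, i ∈ p.1.support

/-- A hyperedge `e` may be used in the cover of the bag at node `i` of the
rooted decomposition: every vertex of `e` occurring in a bag of the subtree
rooted at `i` is contained in the bag at `i`. -/
def AllowedEdge (H : Hypergraph') (D : TreeDecomp H.primal) (r i : D.ι) (e : H.E) : Prop :=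
  ∀ v, H.mem v e → (∃ j, InSubtree D.tree r i j ∧ v ∈ D.bag j) → v ∈ D.bag i

/-- The hypertree width of a hypergraph: as generalized hypertree width, but
for rooted decompositions with the descendant condition on cover hyperedges. -/
noncomputable def htw (H : Hypergraph') : ℕ∞ :=
  ⨅ (D : TreeDecomp H.primal), ⨅ (r : D.ι), ⨆ i,
    ⨅ F ∈ {F : Set H.E |
      H.Covers (D.bag i) F ∧ ∀ e ∈ F, AllowedEdge H D r i e}, F.encard

/-- The fractional hypertree width of a hypergraph: bags are covered
fractionally by nonnegative weights on the hyperedges, each bag vertex being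
covered with total weight at least `1`; the width is the total weight. -/
noncomputable def fhtw (H : Hypergraph') : ℝ≥0∞ :=
  ⨅ (D : TreeDecomp H.primal), ⨆ i,
    ⨅ γ ∈ {γ : H.E → ℝ≥0∞ |
      ∀ v ∈ D.bag i, 1 ≤ ∑' e : {e : H.E // H.mem v e}, γ e.1}, ∑' e, γ e

/-- Add a universal hyperedge (containing all vertices) to a hypergraph. -/
def addUniversal (H : Hypergraph') : Hypergraph' where
  V := H.V
  E := Option H.E
  mem := fun v e => e.elim True (H.mem v)


section Aux
open SimpleGraph


open SimpleGraph

variable {ι : Type} {tr : SimpleGraph ι}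

def SubTreeSet (tr : SimpleGraph ι) (S : Set ι) : Prop :=
  ∀ i ∈ S, ∀ j ∈ S, ∀ p : tr.Path i j, ∀ x ∈ p.1.support, x ∈ S

lemma SubTreeSet.mem_of_walk {S : Set ι} (hS : SubTreeSet tr S) {x y : ι}
    (hx : x ∈ S) (hy : y ∈ S) (w : tr.Walk x y) (hw : w.IsPath) {z : ι}
    (hz : z ∈ w.support) : z ∈ S :=
  hS x hx y hy ⟨w, hw⟩ z hz

lemma isPath_append {x y z : ι} {w1 : tr.Walk x y} {w2 : tr.Walk y z}
    (h1 : w1.IsPath) (h2 : w2.IsPath)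
    (h : ∀ u ∈ w1.support, u ∈ w2.support → u = y) : (w1.append w2).IsPath := by
  rw [Walk.isPath_def, Walk.support_append]
  have h2' := (Walk.isPath_def _).1 h2
  rw [w2.support_eq_cons] at h2'
  rcases List.nodup_cons.1 h2' with ⟨hy2, htail⟩
  refine List.Nodup.append ((Walk.isPath_def _).1 h1) htail ?_
  intro u hu1 hu2
  have : u = y := h u hu1 (by rw [w2.support_eq_cons]; exact List.mem_cons_of_mem _ hu2)
  exact hy2 (this ▸ hu2)

lemma first_hit_core {c a : ι} (w : tr.Walk c a) (L : List ι) (ha : a ∈ L) :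
    ∃ m ∈ L, ∃ (w1 : tr.Walk c m) (w2 : tr.Walk m a),
      w = w1.append w2 ∧ ∀ x ∈ w1.support, x ∈ L → x = m := by
  induction w with
  | nil =>
    exact ⟨_, ha, Walk.nil, Walk.nil, rfl, by simp⟩
  | @cons c d a h w ih =>
    by_cases hc : c ∈ L
    · exact ⟨c, hc, Walk.nil, Walk.cons h w, rfl, by simp⟩
    · obtain ⟨m, hm, w1, w2, hsplit, hfirst⟩ := ih ha
      refine ⟨m, hm, Walk.cons h w1, w2, by rw [hsplit, Walk.cons_append], ?_⟩
      intro x hx hxL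
      rw [Walk.support_cons] at hx
      rcases List.mem_cons.1 hx with rfl | hx
      · exact absurd hxL hc
      · exact hfirst x hx hxL

/-- a path `w : c → a` and a path `p : b → a` meet at a point `m` which lies
on a path from `c` to `b`. -/
lemma first_hit {a b c : ι} (w : tr.Walk c a) (hw : w.IsPath)
    (p : tr.Walk b a) (hp : p.IsPath) :
    ∃ m, m ∈ w.support ∧ m ∈ p.support ∧
      ∃ q : tr.Walk c b, q.IsPath ∧ m ∈ q.support := by
  classical
  obtain ⟨m, hm, w1, w2, hsplit, hfirst⟩ := first_hit_core w p.support p.end_mem_support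
  have hw1 : w1.IsPath := by
    apply Walk.IsPath.of_append_left (q := w2); rwa [← hsplit]
  have hmw : m ∈ w.support := by
    rw [hsplit]; exact Walk.subset_support_append_left _ _ w1.end_mem_support
  have htu : (p.takeUntil m hm).IsPath := hp.takeUntil hm
  refine ⟨m, hmw, hm, w1.append (p.takeUntil m hm).reverse, ?_, ?_⟩
  · refine isPath_append hw1 htu.reverse ?_
    intro u hu1 hu2
    rw [Walk.support_reverse, List.mem_reverse] at hu2
    exact hfirst u hu1 (p.support_takeUntil_subset hm hu2)
  · exact Walk.subset_support_append_left _ _ w1.end_mem_support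

lemma helly3 (hc : tr.Connected) {S1 S2 S3 : Set ι}
    (h1 : SubTreeSet tr S1) (h2 : SubTreeSet tr S2) (h3 : SubTreeSet tr S3)
    {a b c : ι} (ha : a ∈ S1 ∩ S2) (hb : b ∈ S1 ∩ S3) (hcc : c ∈ S2 ∩ S3) :
    ∃ m, m ∈ S1 ∧ m ∈ S2 ∧ m ∈ S3 := by
  classical
  obtain ⟨w⟩ := hc a b
  obtain ⟨p⟩ := hc c b
  obtain ⟨m, hmw, hmp, q, hq, hmq⟩ :=
    first_hit w.toPath.1 w.toPath.2 p.toPath.1 p.toPath.2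
  exact ⟨m, h1.mem_of_walk ha.1 hb.1 _ w.toPath.2 hmw,
    h2.mem_of_walk ha.2 hcc.1 q hq hmq,
    h3.mem_of_walk hcc.2 hb.2 _ p.toPath.2 hmp⟩

lemma helly_finset (hc : tr.Connected) {α : Type} (F : Finset α) (T : α → Set ι)
    (hT : ∀ f, SubTreeSet tr (T f))
    (hpair : ∀ f ∈ F, ∀ g ∈ F, (T f ∩ T g).Nonempty) :
    F.Nonempty → (∃ i, ∀ f ∈ F, i ∈ T f) := by
  classical
  induction F using Finset.induction generalizing T with
  | empty => intro h; exact absurd h (by simp)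
  | @insert a F ha ih =>
    intro _
    rcases F.eq_empty_or_nonempty with rfl | hne
    · obtain ⟨i, hi⟩ := hpair a (by simp) a (by simp)
      exact ⟨i, by simpa using hi.1⟩
    · have ih' : ∃ i, ∀ f ∈ F, i ∈ T f ∩ T a := by
        apply ih (fun f => T f ∩ T a) ?_ ?_ hne
        · intro f
          intro x hx y hy p z hz
          exact ⟨hT f x hx.1 y hy.1 p z hz, hT a x hx.2 y hy.2 p z hz⟩
        · intro f hf g hg
          obtain ⟨x, hx⟩ := hpair f (by simp [hf]) a (by simp)
          obtain ⟨y, hy⟩ := hpair g (by simp [hg]) a (by simp)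
          obtain ⟨z, hz⟩ := hpair f (by simp [hf]) g (by simp [hg])
          obtain ⟨m, m1, m2, m3⟩ := helly3 hc (hT f) (hT g) (hT a)
            (Set.mem_inter hz.1 hz.2) (Set.mem_inter hx.1 hx.2)
            (Set.mem_inter hy.1 hy.2)
          exact ⟨m, ⟨m1, m3⟩, m2, m3⟩
      obtain ⟨i, hi⟩ := ih'
      refine ⟨i, ?_⟩
      intro f hf
      rcases Finset.mem_insert.1 hf with rfl | hf
      · exact (hi _ hne.choose_spec).2
      · exact (hi f hf).1

/-- two subtrees each meeting two disjoint subtrees must intersect -/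
lemma cross (hc : tr.Connected) {U1 U2 S S' : Set ι}
    (hU1 : SubTreeSet tr U1) (hU2 : SubTreeSet tr U2)
    (hS : SubTreeSet tr S) (hS' : SubTreeSet tr S')
    (hdisj : ∀ i, i ∈ U1 → i ∈ U2 → False)
    {x y x' y' : ι} (hx : x ∈ S) (hx1 : x ∈ U1) (hy : y ∈ S) (hy2 : y ∈ U2)
    (hx' : x' ∈ S') (hx'1 : x' ∈ U1) (hy' : y' ∈ S') (hy'2 : y' ∈ U2) :
    ∃ t, t ∈ S ∧ t ∈ S' := by
  classical
  obtain ⟨p0⟩ := hc x' y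
  set p := p0.toPath.1 with hp
  have hpp : p.IsPath := p0.toPath.2
  obtain ⟨w0⟩ := hc x y
  obtain ⟨z, hzw, hzp, q, hq, hzq⟩ := first_hit w0.toPath.1 w0.toPath.2 p hpp
  have hzS : z ∈ S := hS.mem_of_walk hx hy _ w0.toPath.2 hzw
  have hzU1 : z ∈ U1 := hU1.mem_of_walk hx1 hx'1 q hq hzq
  obtain ⟨w1⟩ := hc y' x'
  obtain ⟨t, htw, htp, r, hr, htr⟩ := first_hit w1.toPath.1 w1.toPath.2 p.reverse hpp.reverse
  have htS' : t ∈ S' := hS'.mem_of_walk hy' hx' _ w1.toPath.2 htw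
  have htU2 : t ∈ U2 := hU2.mem_of_walk hy'2 hy2 r hr htr
  rw [Walk.support_reverse, List.mem_reverse] at htp
  refine ⟨t, ?_, htS'⟩
  have hsplit := p.take_spec hzp
  have : t ∈ (p.takeUntil z hzp).support ∨ t ∈ (p.dropUntil z hzp).support := by
    rw [← Walk.mem_support_append_iff, hsplit]; exact htp
  rcases this with h | h
  · exact absurd (hU1.mem_of_walk hx'1 hzU1 _ (hpp.takeUntil hzp) h) (fun h1 => hdisj t h1 htU2)
  · exact hS.mem_of_walk hzS hy _ (hpp.dropUntil hzp) h

lemma encard_ge_of_inj {V : Type} {s : Set V} {m : ℕ} (f : Fin m → V)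
    (hinj : Function.Injective f) (hf : ∀ v, f v ∈ s) : (m : ℕ∞) ≤ s.encard := by
  have h1 : Set.range f ⊆ s := by rintro _ ⟨v, rfl⟩; exact hf v
  have h2 : (Set.range f).encard = m := by
    rw [← Set.image_univ, Set.InjOn.encard_image (hinj.injOn), Set.encard_univ]
    simp
  exact h2 ▸ Set.encard_le_encard h1


lemma bigbag {V : Type} {G : SimpleGraph V} (D : TreeDecomp G) {m : ℕ} (hm : 0 < m)
    (A B : Fin m → V) (injA : Function.Injective A) (injB : Function.Injective B)
    (hAB : ∀ v e, G.Adj (A v) (B e)) :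
    ∃ i, (m : ℕ∞) ≤ (D.bag i).encard := by
  classical
  have : Nonempty (Fin m) := ⟨⟨0, hm⟩⟩
  set T : V → Set D.ι := fun w => {i | w ∈ D.bag i} with hT
  have hsub : ∀ w, SubTreeSet D.tree (T w) := fun w i hi j hj p x hx =>
    D.bag_connected w i j p hi hj x hx
  have hconn := D.isTree.isConnected
  have hmeet : ∀ (u w : V), G.Adj u w → (T u ∩ T w).Nonempty := fun u w h => by
    obtain ⟨i, h1, h2⟩ := D.bag_edge u w h; exact ⟨i, h1, h2⟩
  by_cases hcase : ∀ v v' : Fin m, (T (A v) ∩ T (A v')).Nonempty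
  · obtain ⟨i, hi⟩ := helly_finset hconn Finset.univ (fun v => T (A v))
      (fun v => hsub _) (fun v _ v' _ => hcase v v') Finset.univ_nonempty
    exact ⟨i, encard_ge_of_inj A injA fun v => hi v (Finset.mem_univ v)⟩
  · push_neg at hcase
    obtain ⟨v, v', hvv⟩ := hcase
    have hdisj : ∀ i, i ∈ T (A v) → i ∈ T (A v') → False := fun i h1 h2 =>
      Set.eq_empty_iff_forall_notMem.1 hvv i ⟨h1, h2⟩
    have hpair : ∀ e e' : Fin m, (T (B e) ∩ T (B e')).Nonempty := by
      intro e e'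
      obtain ⟨x, hx1, hx2⟩ := hmeet _ _ (hAB v e)
      obtain ⟨y, hy1, hy2⟩ := hmeet _ _ (hAB v' e)
      obtain ⟨x', hx'1, hx'2⟩ := hmeet _ _ (hAB v e')
      obtain ⟨y', hy'1, hy'2⟩ := hmeet _ _ (hAB v' e')
      obtain ⟨t, ht1, ht2⟩ := cross hconn (hsub (A v)) (hsub (A v')) (hsub (B e)) (hsub (B e'))
        hdisj hx2 hx1 hy2 hy1 hx'2 hx'1 hy'2 hy'1
      exact ⟨t, ht1, ht2⟩
    obtain ⟨i, hi⟩ := helly_finset hconn Finset.univ (fun e => T (B e))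
      (fun e => hsub _) (fun e _ e' _ => hpair e e') Finset.univ_nonempty
    exact ⟨i, encard_ge_of_inj B injB fun e => hi e (Finset.mem_univ e)⟩

/-- the single-node tree decomposition with bag everything -/
def singleDecomp {V : Type} (G : SimpleGraph V) : TreeDecomp G where
  ι := Unit
  tree := ⊥
  isTree := by
    refine ⟨⟨fun a b => ?_⟩, SimpleGraph.isAcyclic_bot⟩
    cases a; cases b; exact SimpleGraph.Reachable.refl _
  bag := fun _ => Set.univ
  bag_vertex := fun v => ⟨(), trivial⟩
  bag_edge := fun u v _ => ⟨(), trivial, trivial⟩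
  bag_connected := fun _ _ _ _ _ _ _ _ => trivial

lemma htw_addUniversal_le_one (H : Hypergraph') : htw (addUniversal H) ≤ 1 := by
  refine le_trans (iInf_le _ (singleDecomp _)) ?_
  refine le_trans (iInf_le _ ()) ?_
  refine iSup_le fun i => ?_
  have hmem : ({Option.none} : Set (Option H.E)) ∈
      {F : Set (addUniversal H).E | (addUniversal H).Covers ((singleDecomp _).bag i) F ∧
        ∀ e ∈ F, AllowedEdge (addUniversal H) (singleDecomp _) () i e} := by
    constructor
    · intro v _
      exact ⟨Option.none, rfl, trivial⟩
    · intro e _ v _ _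
      exact Set.mem_univ v
  refine le_trans (iInf₂_le _ hmem) ?_
  exact (Set.encard_singleton (Option.none : Option H.E)).le

end Aux

/-- adding a universal hyperedge to any hypergraph yields a
hypergraph of hypertree width (at most) one; hence there is a family of
hypergraphs of hypertree width one with unbounded incidence treewidth. -/
theorem universal_hyperedge_htw_one :
    (∀ H : Hypergraph', htw (addUniversal H) ≤ 1) ∧
      ∀ n : ℕ, ∃ H : Hypergraph',
        htw H ≤ 1 ∧ (n : ℕ∞) < treewidth H.incidenceGraph := by
  refine ⟨htw_addUniversal_le_one, fun n => ?_⟩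
  set H0 : Hypergraph' := ⟨Fin (n+2), Fin (n+2), fun _ _ => True⟩ with hH0
  refine ⟨addUniversal H0, htw_addUniversal_le_one H0, ?_⟩
  have key : ∀ D : TreeDecomp (addUniversal H0).incidenceGraph,
      ∃ i, ((n+2 : ℕ) : ℕ∞) ≤ (D.bag i).encard := by
    intro D
    refine bigbag D (by omega) (fun v => Sum.inl v) (fun e => Sum.inr (some e))
      (fun a b h => by injection h)
      (fun a b h => by injection h with h1; injection h1) ?_
    intro v e
    refine ⟨by simp, Or.inl ⟨v, some e, rfl, rfl, trivial⟩⟩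
  have main : ∀ D : TreeDecomp (addUniversal H0).incidenceGraph,
      ((n+1 : ℕ) : ℕ∞) ≤ ⨆ i, ((D.bag i).encard - 1) := by
    intro D
    obtain ⟨i, hi⟩ := key D
    refine le_iSup_of_le i ?_
    calc ((n+1:ℕ):ℕ∞) = ((n+2 : ℕ) : ℕ∞) - 1 := by
          rw [← Nat.cast_one (R := ℕ∞), ← ENat.coe_sub]; norm_num
      _ ≤ _ := tsub_le_tsub_right hi 1
  have : ((n+1 : ℕ) : ℕ∞) ≤ treewidth (addUniversal H0).incidenceGraph := by
    unfold treewidth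
    exact le_iInf main
  refine lt_of_lt_of_le ?_ this
  exact_mod_cast Nat.lt_succ_self n
end
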